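/- arXiv:0705.1033 — 5 statements merged into one kernel-verified Lean document; each statement's English description precedes it below -/
import Mathlib

section
/- Let N ≥ 1 and let c : ZMod N → Bool be a two-coloring of N positions arranged in a cycle (positions with c i = true are called blue). Let B be the total number of blue positions, and let w ≤ N be a window length. Then there exists a starting position i such that the number k of blue positions in the cyclic window {i, i+1, ..., i+w−1} of length w satisfies |k·N − w·B| < N (equivalently, k is within strictly less than 1 of the average value w·B/N). -/
/-- Discrete intermediate value theorem for sequences increasing by at most 1. -/
lemma ivt_step (g : ℕ → ℕ) (hg : ∀ n, g (n + 1) ≤ g n + 1) (m : ℕ) :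
    ∀ K, g 0 ≤ m → m ≤ g K → ∃ n, g n = m := by
  intro K
  induction K with
  | zero => intro h0 hK; exact ⟨0, le_antisymm h0 hK⟩
  | succ K ih =>
    intro h0 hK
    by_cases h : m ≤ g K
    · exact ih h0 h
    · exact ⟨K + 1, by have := hg K; omega⟩

/-- Discrete continuity on a necklace: some cyclic window of length `w`
has blue count within strictly less than 1 of the average `w·B/N`. -/
theorem necklace_window_near_average (N : ℕ) [NeZero N] (hN : 1 ≤ N)
    (c : ZMod N → Bool)
    (B : ℕ) (hB : B = (Finset.univ.filter (fun j : ZMod N => c j = true)).card)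
    (w : ℕ) (hw : w ≤ N) :
    ∃ i : ZMod N,
      |((((Finset.range w).filter
            (fun j : ℕ => c (i + (j : ZMod N)) = true)).card : ℤ) * (N : ℤ)
          - (w : ℤ) * (B : ℤ))| < (N : ℤ) := by
  set f : ZMod N → ℕ :=
    fun i => ((Finset.range w).filter (fun j : ℕ => c (i + (j : ZMod N)) = true)).card with hf
  -- total sum of window counts
  have hsum : ∑ i : ZMod N, f i = w * B := by
    have : ∀ i : ZMod N, f i = ∑ j ∈ Finset.range w,
        (if c (i + (j : ZMod N)) = true then 1 else 0) := by
      intro i; simp only [hf]; rw [Finset.card_filter]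
    simp only [this]
    rw [Finset.sum_comm]
    have hinner : ∀ j : ℕ, (∑ i : ZMod N,
        (if c (i + (j : ZMod N)) = true then 1 else 0)) = B := by
      intro j
      rw [hB, Finset.card_filter]
      exact Fintype.sum_equiv (Equiv.addRight (j : ZMod N)) _ _ (fun i => rfl)
    simp [hinner, mul_comm]
  -- continuity: window count increases by at most 1 when shifting start
  have hstep : ∀ i : ZMod N, f (i + 1) ≤ f i + 1 := by
    intro i
    have h1 : f (i + 1) ≤ ((Finset.range (w + 1)).filter
        (fun j : ℕ => c (i + (j : ZMod N)) = true)).card := by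
      apply Finset.card_le_card_of_injOn (fun j => j + 1)
      · intro j hj
        simp only [Finset.mem_coe, Finset.mem_filter, Finset.mem_range] at hj ⊢
        refine ⟨by omega, ?_⟩
        have : (i + 1 + (j : ZMod N)) = i + ((j + 1 : ℕ) : ZMod N) := by
          push_cast; ring
        rw [← this]; exact hj.2
      · intro a _ b _ h; simpa using h
    have h2 : ((Finset.range (w + 1)).filter
        (fun j : ℕ => c (i + (j : ZMod N)) = true)).card ≤ f i + 1 := by
      rw [Finset.range_add_one, Finset.filter_insert]
      split
      · rw [Finset.card_insert_of_notMem (by simp)]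
      · exact Nat.le_succ_of_le le_rfl
    exact h1.trans h2
  -- m is the floor of the average, r the remainder
  have hNpos : 0 < N := hN
  obtain ⟨m, hm1, hm2⟩ : ∃ m : ℕ, m * N ≤ w * B ∧ w * B < m * N + N := by
    refine ⟨w * B / N, Nat.div_mul_le_self _ _, ?_⟩
    have : w * B / N < w * B / N + 1 := Nat.lt_succ_self _
    rw [Nat.div_lt_iff_lt_mul hNpos] at this
    calc w * B < (w * B / N + 1) * N := this
      _ = w * B / N * N + N := by rw [Nat.add_mul, Nat.one_mul]
  have hlow : ∃ a : ZMod N, f a ≤ m := by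
    by_contra h
    push_neg at h
    have : ∀ i : ZMod N, m + 1 ≤ f i := fun i => h i
    have hge : N * (m + 1) ≤ ∑ i : ZMod N, f i := by
      calc N * (m + 1) = ∑ _i : ZMod N, (m + 1) := by
            simp [Finset.sum_const, ZMod.card]
        _ ≤ ∑ i : ZMod N, f i := Finset.sum_le_sum (fun i _ => this i)
    rw [hsum, Nat.mul_succ] at hge
    linarith
  have hhigh : ∃ b : ZMod N, m ≤ f b := by
    by_contra h
    push_neg at h
    have hle : ∑ i : ZMod N, (f i + 1) ≤ ∑ _i : ZMod N, m :=
      Finset.sum_le_sum (fun i _ => h i)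
    rw [Finset.sum_add_distrib, hsum, Finset.sum_const, Finset.sum_const,
      Finset.card_univ, ZMod.card] at hle
    simp only [smul_eq_mul] at hle
    have : (1 : ℕ) ≤ N := hN
    linarith
  obtain ⟨a, ha⟩ := hlow
  obtain ⟨b, hb⟩ := hhigh
  -- discrete IVT along the cycle from a to b
  set g : ℕ → ℕ := fun n => f (a + (n : ZMod N)) with hg
  have hgstep : ∀ n, g (n + 1) ≤ g n + 1 := by
    intro n
    have : a + ((n + 1 : ℕ) : ZMod N) = (a + (n : ZMod N)) + 1 := by
      push_cast; ring
    simp only [hg, this]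
    exact hstep _
  have hK : (( (b - a).val : ZMod N)) = b - a := ZMod.natCast_rightInverse _
  have hgK : g (b - a).val = f b := by
    simp [hg, hK]
  obtain ⟨n, hn⟩ := ivt_step g hgstep m (b - a).val (by simpa [hg] using ha)
    (by rw [hgK]; exact hb)
  refine ⟨a + (n : ZMod N), ?_⟩
  have hfeq : f (a + (n : ZMod N)) = m := hn
  change |((f (a + (n : ZMod N)) : ℤ)) * N - (w : ℤ) * B| < N
  rw [hfeq]
  have h1 : (m : ℤ) * N ≤ (w : ℤ) * B := by exact_mod_cast hm1
  have h2 : (w : ℤ) * B < (m : ℤ) * N + N := by exact_mod_cast hm2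
  rw [abs_lt]
  constructor <;> linarith
end

section
/- Let c : Fin N → Bool be a two-coloring of an array of N elements, where elements with c i = true are called blue and the others red. Let B be the number of blue elements and R = N − B the number of red elements. Then there exist indices a ≤ b ≤ N such that the contiguous subarray with index set {i : a ≤ i < b} contains k blue elements and r red elements with |2k − B| ≤ 2 and |2r − R| ≤ 2 (i.e., the subarray contains half of the blue elements to within one and half of the red elements to within one). -/
open Finset

/-- Discrete intermediate value: a ℤ-valued sequence with steps of size ≤ 2
that is (at one endpoint) ≤ hi and (at one endpoint) ≥ lo, where the interval
[lo,hi] has width ≥ 2, hits the interval. -/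
lemma nba_ivt (f : ℕ → ℤ) (hstep : ∀ a : ℕ, |f (a+1) - f a| ≤ 2)
    (lo hi : ℤ) (hw : lo + 2 ≤ hi) :
    ∀ n : ℕ, (f 0 ≤ hi ∨ f n ≤ hi) → (lo ≤ f 0 ∨ lo ≤ f n) →
      ∃ a, a ≤ n ∧ lo ≤ f a ∧ f a ≤ hi := by
  intro n
  induction n with
  | zero =>
    intro h1 h2
    exact ⟨0, le_rfl, by omega, by omega⟩
  | succ n ih =>
    intro h1 h2
    have hs := hstep n
    rw [abs_le] at hs
    by_cases h0 : lo ≤ f 0 ∧ f 0 ≤ hi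
    · exact ⟨0, Nat.zero_le _, h0.1, h0.2⟩
    by_cases hn1 : lo ≤ f (n+1) ∧ f (n+1) ≤ hi
    · exact ⟨n+1, le_rfl, hn1.1, hn1.2⟩
    obtain ⟨a, ha, h⟩ := ih (by omega) (by omega)
    exact ⟨a, Nat.le_succ_of_le ha, h.1, h.2⟩

/-- Necklace-bisection lemma, array version: some contiguous subarray
contains half of the blue elements to within one and half of the red
elements to within one. -/
theorem necklace_bisection_array (N : ℕ) (c : Fin N → Bool)
    (B R : ℕ) (hB : B = (Finset.univ.filter (fun i : Fin N => c i = true)).card)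
    (hR : R = N - B) :
    ∃ a b : ℕ, a ≤ b ∧ b ≤ N ∧
      |2 * (((Finset.univ.filter
          (fun i : Fin N => a ≤ (i : ℕ) ∧ (i : ℕ) < b ∧ c i = true)).card : ℤ))
        - (B : ℤ)| ≤ 2 ∧
      |2 * (((Finset.univ.filter
          (fun i : Fin N => a ≤ (i : ℕ) ∧ (i : ℕ) < b ∧ c i = false)).card : ℤ))
        - (R : ℤ)| ≤ 2 := by
  set m := N / 2 with hm
  set L := N - m with hLdef
  have hmLN : m + L = N := by omega
  have hLm : m ≤ L := by omega
  have hLm1 : L ≤ m + 1 := by omega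
  -- blue-count of window [a, b) as an integer sum
  set S : ℕ → ℕ → ℤ := fun a b =>
    ∑ i : Fin N, if a ≤ (i : ℕ) ∧ (i : ℕ) < b ∧ c i = true then 1 else 0 with hS
  set T : ℕ → ℤ := fun j =>
    ∑ i : Fin N, if (i : ℕ) = j ∧ c i = true then 1 else 0 with hT
  have hcard : ∀ a b : ℕ,
      (((Finset.univ.filter
        (fun i : Fin N => a ≤ (i : ℕ) ∧ (i : ℕ) < b ∧ c i = true)).card : ℤ)) = S a b := by
    intro a b
    rw [hS, Finset.card_filter]
    push_cast
    rfl
  have hT0 : ∀ j, 0 ≤ T j := by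
    intro j
    apply Finset.sum_nonneg
    intro i _
    split_ifs <;> norm_num
  have hT1 : ∀ j, T j ≤ 1 := by
    intro j
    by_cases hj : j < N
    · have hle : T j ≤ ∑ i : Fin N, if i = ⟨j, hj⟩ then (1:ℤ) else 0 := by
        apply Finset.sum_le_sum
        intro i _
        split_ifs with h1 h2
        · exact le_rfl
        · exact absurd (Fin.ext h1.1) h2
        · exact zero_le_one
        · exact le_rfl
      simpa using hle
    · have : T j = 0 := by
        apply Finset.sum_eq_zero
        intro i _
        rw [if_neg]
        rintro ⟨h, -⟩
        exact hj (h ▸ i.isLt)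
      omega
  -- the step identity
  have key : ∀ a : ℕ, S (a+1) (a+1+L) - S a (a+L) = T (a+L) - T a := by
    intro a
    rw [hS, hT, ← Finset.sum_sub_distrib, ← Finset.sum_sub_distrib]
    apply Finset.sum_congr rfl
    intro i _
    by_cases h : c i = true
    · simp only [h, and_true]
      split_ifs <;> omega
    · simp only [h]
      norm_num
  -- window-length identity: number of indices in [a,b) is b - a when a ≤ b ≤ N
  have hlen : ∀ a b : ℕ, a ≤ b → b ≤ N →
      (∑ i : Fin N, if a ≤ (i : ℕ) ∧ (i : ℕ) < b then (1:ℤ) else 0) = (b : ℤ) - a := by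
    intro a b hab hbN
    have h1 : (∑ i : Fin N, if a ≤ (i : ℕ) ∧ (i : ℕ) < b then (1:ℤ) else 0)
        = ∑ j ∈ Finset.range N, if a ≤ j ∧ j < b then (1:ℤ) else 0 :=
      Fin.sum_univ_eq_sum_range (fun j => if a ≤ j ∧ j < b then (1:ℤ) else 0) N
    have h2 : (∑ j ∈ Finset.range N, if a ≤ j ∧ j < b then (1:ℤ) else 0)
        = ∑ j ∈ Finset.range N, if j ∈ Finset.Ico a b then (1:ℤ) else 0 := by
      apply Finset.sum_congr rfl
      intro j _
      apply if_congr _ rfl rfl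
      simp [Finset.mem_Ico]
    have h3 : Finset.range N ∩ Finset.Ico a b = Finset.Ico a b := by
      ext j
      simp only [Finset.mem_inter, Finset.mem_range, Finset.mem_Ico]
      omega
    rw [h1, h2, Finset.sum_ite_mem, h3, Finset.sum_const, Nat.card_Ico, nsmul_eq_mul, mul_one]
    omega
  -- blue total as a sum
  have hBsum : (B : ℤ) = ∑ i : Fin N, if c i = true then (1:ℤ) else 0 := by
    rw [hB, Finset.card_filter]
    push_cast
    rfl
  have hBN : B ≤ N := by
    rw [hB]
    calc (Finset.univ.filter (fun i : Fin N => c i = true)).card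
        ≤ Finset.univ.card := Finset.card_filter_le _ _
      _ = N := by simp
  -- endpoint sum identity
  have hE : ∃ E : ℤ, S 0 (0 + L) + S m (m + L) = (B : ℤ) + E ∧ 0 ≤ E ∧ E ≤ (N : ℤ) - 2 * m := by
    refine ⟨(∑ i : Fin N, if m ≤ (i : ℕ) ∧ (i : ℕ) < L ∧ c i = true then 1 else 0), ?_, ?_, ?_⟩
    · rw [hS, hBsum, ← Finset.sum_add_distrib, ← Finset.sum_add_distrib]
      apply Finset.sum_congr rfl
      intro i _
      have hi := i.isLt
      by_cases h : c i = true
      · simp only [h, and_true]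
        split_ifs <;> omega
      · simp only [h]
        norm_num
    · apply Finset.sum_nonneg; intro i _; split_ifs <;> norm_num
    · rcases Nat.lt_or_ge L (m + 1) with hcase | hcase
      · have hLm' : L = m := by omega
        have : (∑ i : Fin N, if m ≤ (i : ℕ) ∧ (i : ℕ) < L ∧ c i = true then (1:ℤ) else 0) = 0 := by
          apply Finset.sum_eq_zero
          intro i _
          rw [if_neg]
          rintro ⟨h1, h2, -⟩
          omega
        rw [this]
        omega
      · have hLm' : L = m + 1 := by omega
        have heq : (∑ i : Fin N, if m ≤ (i : ℕ) ∧ (i : ℕ) < L ∧ c i = true then (1:ℤ) else 0) = T m := by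
          rw [hT]
          apply Finset.sum_congr rfl
          intro i _
          apply if_congr _ rfl rfl
          constructor
          · rintro ⟨h1, h2, h3⟩; exact ⟨by omega, h3⟩
          · rintro ⟨h1, h2⟩; exact ⟨by omega, by omega, h2⟩
        rw [heq]
        have := hT1 m
        have hN2m : (N : ℤ) - 2 * m = 1 := by
          have : N = 2 * m + 1 := by omega
          push_cast [this]; ring
        omega
  obtain ⟨E, hEeq, hE0, hE1⟩ := hE
  have hN2m0 : (0:ℤ) ≤ (N : ℤ) - 2 * m := by
    have : 2 * m ≤ N := by omega
    push_cast at this ⊢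
    omega
  have hN2m1 : (N : ℤ) - 2 * m ≤ 1 := by
    have : N ≤ 2 * m + 1 := by omega
    push_cast at this ⊢
    omega
  -- apply the discrete IVT to d a = 2 * S a (a+L) - B
  have hd0m : (2 * S 0 (0 + L) - B) + (2 * S m (m + L) - B) = 2 * E := by omega
  obtain ⟨a, ham, hlo, hhi⟩ := nba_ivt (fun a => 2 * S a (a + L) - (B : ℤ))
    (by
      intro a
      have hk := key a
      have t1 := hT0 (a + L); have t2 := hT1 (a + L)
      have t3 := hT0 a; have t4 := hT1 a
      rw [abs_le]
      constructor <;> omega)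
    ((N : ℤ) - 2 * m - 2) 2 (by omega) m
    (by omega) (by omega)
  refine ⟨a, a + L, Nat.le_add_right _ _, by omega, ?_, ?_⟩
  · rw [hcard]
    rw [abs_le]
    omega
  · -- red count = L - blue count
    have hsplit : (((Finset.univ.filter
          (fun i : Fin N => a ≤ (i : ℕ) ∧ (i : ℕ) < a + L ∧ c i = false)).card : ℤ))
        + S a (a + L) = (L : ℤ) := by
      have hred : (((Finset.univ.filter
          (fun i : Fin N => a ≤ (i : ℕ) ∧ (i : ℕ) < a + L ∧ c i = false)).card : ℤ))
          = ∑ i : Fin N, if a ≤ (i : ℕ) ∧ (i : ℕ) < a + L ∧ c i = false then (1:ℤ) else 0 := by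
        rw [Finset.card_filter]; push_cast; rfl
      rw [hred, hS, ← Finset.sum_add_distrib]
      have := hlen a (a + L) (Nat.le_add_right _ _) (by omega)
      have hL' : (((a + L : ℕ)) : ℤ) - (a : ℤ) = (L : ℤ) := by push_cast; ring
      rw [← hL', ← this]
      apply Finset.sum_congr rfl
      intro i _
      by_cases h : c i = true <;>
        simp [h]
    have hRZ : (R : ℤ) = (N : ℤ) - B := by
      rw [hR]
      push_cast [hBN]
      ring
    have hLZ : (L : ℤ) = (N : ℤ) - m := by
      push_cast [hLdef, hm]
      omega
    rw [abs_le]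
    constructor <;> [skip; skip] <;> omega
end

section
/- Let p be a real number with 0 < p < 1, let c > 0 be real, let N ≥ 2 be a natural number, and let S be a natural number with (S : ℝ) ≥ (8·c/p)·Real.log N. Then the sum over all natural numbers k ∈ {0, 1, ..., S} with (k : ℝ) > p·S/2 of (S choose k)·p^k·(1−p)^(S−k) is at least 1 − N^(−c). In words: when at least (8c/p)·ln N coins, each with heads probability p, are flipped, then with probability at least 1 − N^(−c) more than p·S/2 of the flips are heads. -/
/-- Coin-flipping lemma: with `S ≥ (8c/p)·ln N` flips of a coin with heads
probability `p`, with probability at least `1 − N^{-c}` more than `p·S/2`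
of the flips are heads. -/
theorem coin_flipping_whp (p : ℝ) (hp0 : 0 < p) (hp1 : p < 1)
    (c : ℝ) (hc : 0 < c) (N : ℕ) (hN : 2 ≤ N)
    (S : ℕ) (hS : (S : ℝ) ≥ (8 * c / p) * Real.log N) :
    1 - (N : ℝ) ^ (-c : ℝ) ≤
      ∑ k ∈ (Finset.range (S + 1)).filter (fun k : ℕ => p * S / 2 < (k : ℝ)),
        (S.choose k : ℝ) * p ^ k * (1 - p) ^ (S - k) := by
  have hq0 : (0:ℝ) < 1 - p := by linarith
  have hN2 : (2:ℝ) ≤ (N:ℝ) := by exact_mod_cast hN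
  have hN0 : (0:ℝ) < N := by linarith
  have hlogN : 0 < Real.log N := Real.log_pos (by linarith)
  set f : ℕ → ℝ := fun k => (S.choose k : ℝ) * p ^ k * (1 - p) ^ (S - k) with hf
  -- total probability is 1
  have htot : ∑ k ∈ Finset.range (S + 1), f k = 1 := by
    calc ∑ k ∈ Finset.range (S + 1), f k
        = ∑ k ∈ Finset.range (S + 1), p ^ k * (1 - p) ^ (S - k) * (S.choose k) := by
          apply Finset.sum_congr rfl; intro k _; simp [hf]; ring
      _ = (p + (1 - p)) ^ S := (add_pow p (1 - p) S).symm
      _ = 1 := by norm_num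
  have hsplit := Finset.sum_filter_add_sum_filter_not (Finset.range (S + 1))
    (fun k : ℕ => p * S / 2 < (k : ℝ)) f
  -- bound the lower tail
  have hg : ∀ k, (0:ℝ) ≤ (S.choose k : ℝ) * (p / 2) ^ k * (1 - p) ^ (S - k) := by
    intro k; positivity
  have hstep : ∑ k ∈ (Finset.range (S + 1)).filter (fun k : ℕ => ¬ (p * S / 2 < (k : ℝ))), f k
      ≤ (2:ℝ) ^ (p * S / 2 : ℝ) * ((p / 2 + (1 - p)) ^ S) := by
    have hsum2 : ∑ k ∈ Finset.range (S + 1), (S.choose k : ℝ) * (p / 2) ^ k * (1 - p) ^ (S - k)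
        = (p / 2 + (1 - p)) ^ S := by
      rw [add_pow]
      apply Finset.sum_congr rfl; intro k _; ring
    calc ∑ k ∈ (Finset.range (S + 1)).filter (fun k : ℕ => ¬ (p * S / 2 < (k : ℝ))), f k
        ≤ ∑ k ∈ (Finset.range (S + 1)).filter (fun k : ℕ => ¬ (p * S / 2 < (k : ℝ))),
            (2:ℝ) ^ (p * S / 2 : ℝ) * ((S.choose k : ℝ) * (p / 2) ^ k * (1 - p) ^ (S - k)) := by
          apply Finset.sum_le_sum
          intro k hk
          obtain ⟨_, hk2⟩ := Finset.mem_filter.mp hk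
          push_neg at hk2
          have h2k : (2:ℝ) ^ (k:ℝ) ≤ (2:ℝ) ^ (p * S / 2 : ℝ) :=
            Real.rpow_le_rpow_of_exponent_le one_le_two hk2
          have heq : f k = (2:ℝ) ^ (k:ℝ) * ((S.choose k : ℝ) * (p / 2) ^ k * (1 - p) ^ (S - k)) := by
            rw [Real.rpow_natCast]
            have hppk : (p:ℝ) ^ k = 2 ^ k * (p / 2) ^ k := by
              rw [← mul_pow]; congr 1; ring
            simp only [hf]
            rw [hppk]; ring
          rw [heq]
          exact mul_le_mul_of_nonneg_right h2k (hg k)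
      _ = (2:ℝ) ^ (p * S / 2 : ℝ) * ∑ k ∈ (Finset.range (S + 1)).filter
            (fun k : ℕ => ¬ (p * S / 2 < (k : ℝ))),
            ((S.choose k : ℝ) * (p / 2) ^ k * (1 - p) ^ (S - k)) := by
          rw [Finset.mul_sum]
      _ ≤ (2:ℝ) ^ (p * S / 2 : ℝ) * ∑ k ∈ Finset.range (S + 1),
            ((S.choose k : ℝ) * (p / 2) ^ k * (1 - p) ^ (S - k)) := by
          apply mul_le_mul_of_nonneg_left _ (by positivity)
          exact Finset.sum_le_sum_of_subset_of_nonneg (Finset.filter_subset _ _)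
            (fun k _ _ => hg k)
      _ = (2:ℝ) ^ (p * S / 2 : ℝ) * ((p / 2 + (1 - p)) ^ S) := by rw [hsum2]
  -- numeric bound
  have hnum : (2:ℝ) ^ (p * S / 2 : ℝ) * ((p / 2 + (1 - p)) ^ S) ≤ (N:ℝ) ^ (-c : ℝ) := by
    have h1 : p / 2 + (1 - p) = 1 - p / 2 := by ring
    rw [h1]
    have h2 : (1 - p / 2 : ℝ) ≤ Real.exp (-(p / 2)) := by
      have := Real.add_one_le_exp (-(p / 2)); linarith
    have h3 : (1 - p / 2) ^ S ≤ Real.exp (-(p / 2)) ^ S :=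
      pow_le_pow_left₀ (by linarith) h2 S
    have h3' : Real.exp (-(p / 2)) ^ S = Real.exp ((S:ℝ) * (-(p / 2))) := by
      rw [← Real.exp_nat_mul]
    have h4 : (2:ℝ) ^ (p * S / 2 : ℝ) = Real.exp (Real.log 2 * (p * S / 2)) :=
      Real.rpow_def_of_pos two_pos _
    have h5 : (N:ℝ) ^ (-c : ℝ) = Real.exp (Real.log N * (-c)) :=
      Real.rpow_def_of_pos hN0 _
    have hpS : p * S ≥ 8 * c * Real.log N := by
      have := mul_le_mul_of_nonneg_left hS hp0.le
      rw [mul_comm (8 * c / p) (Real.log N)] at this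
      calc 8 * c * Real.log N = p * (Real.log N * (8 * c / p)) := by field_simp
        _ ≤ p * S := this
      -- `this : p * ((Real.log N) * (8*c/p)) ≤ p * S`
    have hlog2 : Real.log 2 < 0.6931471808 := Real.log_two_lt_d9
    have hexp : Real.log 2 * (p * S / 2) + (S:ℝ) * (-(p / 2)) ≤ Real.log N * (-c) := by
      have h6 : (0.3:ℝ) ≤ 1 - Real.log 2 := by linarith
      have h7 : (1 - Real.log 2) * (8 * (c * Real.log N)) ≤ (1 - Real.log 2) * (p * S) :=
        mul_le_mul_of_nonneg_left (by linarith) (by linarith)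
      have h8 : (0.3:ℝ) * (8 * (c * Real.log N)) ≤ (1 - Real.log 2) * (8 * (c * Real.log N)) :=
        mul_le_mul_of_nonneg_right h6 (by positivity)
      nlinarith [h7, h8, mul_pos hc hlogN]
    calc (2:ℝ) ^ (p * S / 2 : ℝ) * (1 - p / 2) ^ S
        ≤ Real.exp (Real.log 2 * (p * S / 2)) * Real.exp ((S:ℝ) * (-(p / 2))) := by
          rw [h4]
          apply mul_le_mul_of_nonneg_left _ (Real.exp_pos _).le
          rw [← h3']; exact h3
      _ = Real.exp (Real.log 2 * (p * S / 2) + (S:ℝ) * (-(p / 2))) := (Real.exp_add _ _).symm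
      _ ≤ Real.exp (Real.log N * (-c)) := Real.exp_le_exp.mpr hexp
      _ = (N:ℝ) ^ (-c : ℝ) := h5.symm
  have := hstep.trans hnum
  linarith [hsplit, htot, this]
end

section
/- Let N ≥ 1 and b be natural numbers, and let r : ZMod N → ℕ satisfy r i ≤ b for every i. Then there exists a cyclically contiguous subset I of ZMod N (i.e., I = {s, s+1, ..., s+m−1} with indices taken modulo N, for some s and some 0 ≤ m ≤ N) such that: (i) |card I − card Iᶜ| ≤ 2, and (ii) |∑_{i ∈ I} r i − ∑_{i ∉ I} r i| ≤ 2·b + 2. -/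
/-- First crossing lemma for integer sequences. -/
lemma fbcp_cross (g : ℕ → ℤ) : ∀ k, g 0 < 0 → 0 ≤ g k →
    ∃ j, g j < 0 ∧ 0 ≤ g (j + 1) := by
  intro k
  induction k with
  | zero => intro h0 hk; exact absurd hk (by linarith)
  | succ n ih =>
    intro h0 hk
    by_cases h : 0 ≤ g n
    · exact ih h0 h
    · exact ⟨n, by linarith, hk⟩

/-- Combinatorial core of the fully-balanced partition: some cyclically
contiguous subset of positions splits both the number of positions and
the total outgoing-edge count nearly evenly. -/
theorem fully_balanced_cyclic_partition (N b : ℕ) [NeZero N] (hN : 1 ≤ N)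
    (r : ZMod N → ℕ) (hr : ∀ i, r i ≤ b) :
    ∃ I : Finset (ZMod N),
      (∃ (s : ZMod N) (m : ℕ), m ≤ N ∧
        I = (Finset.range m).image (fun j : ℕ => s + (j : ZMod N))) ∧
      |(I.card : ℤ) - (Iᶜ.card : ℤ)| ≤ 2 ∧
      |(∑ i ∈ I, (r i : ℤ)) - ∑ i ∈ Iᶜ, (r i : ℤ)| ≤ 2 * (b : ℤ) + 2 := by
  classical
  set m : ℕ := (N + 1) / 2 with hm_def
  have hmN : m ≤ N := by omega
  have hinj : ∀ s : ZMod N, ∀ j1 ∈ Finset.range m, ∀ j2 ∈ Finset.range m,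
      s + (j1 : ZMod N) = s + (j2 : ZMod N) → j1 = j2 := by
    intro s j1 h1 j2 h2 h
    rw [Finset.mem_range] at h1 h2
    have hc : (j1 : ZMod N) = (j2 : ZMod N) := add_left_cancel h
    have := congrArg ZMod.val hc
    rwa [ZMod.val_cast_of_lt (lt_of_lt_of_le h1 hmN),
      ZMod.val_cast_of_lt (lt_of_lt_of_le h2 hmN)] at this
  set I : ZMod N → Finset (ZMod N) :=
    fun s => (Finset.range m).image (fun j : ℕ => s + (j : ZMod N)) with hI_def
  have hcard : ∀ s, (I s).card = m := by
    intro s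
    rw [hI_def]
    rw [Finset.card_image_of_injOn (fun a ha b hb h => hinj s a ha b hb h),
      Finset.card_range]
  have hcardc : ∀ s, (I s)ᶜ.card = N - m := by
    intro s
    rw [Finset.card_compl, hcard, ZMod.card]
  set S : ZMod N → ℤ := fun s => ∑ j ∈ Finset.range m, (r (s + (j : ZMod N)) : ℤ)
    with hS_def
  set T : ℤ := ∑ i : ZMod N, (r i : ℤ) with hT_def
  have hSI : ∀ s, ∑ i ∈ I s, (r i : ℤ) = S s := by
    intro s
    rw [hI_def, hS_def]
    exact Finset.sum_image (hinj s)
  have hcompl : ∀ s, ∑ i ∈ (I s)ᶜ, (r i : ℤ) = T - S s := by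
    intro s
    have := Finset.sum_add_sum_compl (I s) (fun i => (r i : ℤ))
    rw [hSI s] at this
    linarith
  -- step relation
  have hstep : ∀ s : ZMod N, S (s + 1) + (r s : ℤ) = S s + (r (s + (m : ZMod N)) : ℤ) := by
    intro s
    have h1 : ∑ j ∈ Finset.range (m + 1), (r (s + (j : ZMod N)) : ℤ)
        = S s + (r (s + (m : ZMod N)) : ℤ) := by
      rw [Finset.sum_range_succ]
    have h2 : ∑ j ∈ Finset.range (m + 1), (r (s + (j : ZMod N)) : ℤ)
        = (∑ j ∈ Finset.range m, (r (s + ((j + 1 : ℕ) : ZMod N)) : ℤ)) + (r (s + (0 : ℕ)) : ℤ) := by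
      rw [Finset.sum_range_succ']
    have h3 : (∑ j ∈ Finset.range m, (r (s + ((j + 1 : ℕ) : ZMod N)) : ℤ)) = S (s + 1) := by
      apply Finset.sum_congr rfl
      intro j _
      congr 1
      push_cast
      ring
    have h4 : (r (s + ((0 : ℕ) : ZMod N)) : ℤ) = (r s : ℤ) := by norm_num
    rw [h2, h3, h4] at h1
    linarith
  -- total over all starting points
  have hSsum : ∑ s : ZMod N, S s = (m : ℤ) * T := by
    rw [hS_def]
    rw [Finset.sum_comm]
    have : ∀ j ∈ Finset.range m, ∑ s : ZMod N, (r (s + (j : ZMod N)) : ℤ) = T := by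
      intro j _
      rw [hT_def]
      exact Fintype.sum_equiv (Equiv.addRight (j : ZMod N)) _ _ (fun s => rfl)
    rw [Finset.sum_congr rfl this, Finset.sum_const, Finset.card_range, nsmul_eq_mul]
  have hT0 : 0 ≤ T := Finset.sum_nonneg (fun i _ => by positivity)
  have hTle : T ≤ (N : ℤ) * b := by
    rw [hT_def]
    calc ∑ i : ZMod N, (r i : ℤ) ≤ ∑ _i : ZMod N, (b : ℤ) :=
          Finset.sum_le_sum (fun i _ => by exact_mod_cast hr i)
      _ = (N : ℤ) * b := by
          rw [Finset.sum_const, Finset.card_univ, ZMod.card, nsmul_eq_mul]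
  set g : ZMod N → ℤ := fun s => 2 * S s - T with hg_def
  have hgsum : ∑ s : ZMod N, g s = (2 * (m : ℤ) - N) * T := by
    rw [hg_def]
    rw [Finset.sum_sub_distrib, ← Finset.mul_sum, hSsum, Finset.sum_const,
      Finset.card_univ, ZMod.card, nsmul_eq_mul]
    ring
  have hmN2 : (0 : ℤ) ≤ 2 * (m : ℤ) - N ∧ 2 * (m : ℤ) - N ≤ 1 := by
    constructor <;> [skip; skip] <;> (push_cast; omega)
  have hgsum0 : 0 ≤ ∑ s : ZMod N, g s := by
    rw [hgsum]; exact mul_nonneg hmN2.1 hT0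
  have hgsumT : ∑ s : ZMod N, g s ≤ T := by
    rw [hgsum]
    nlinarith [hmN2.1, hmN2.2, hT0]
  have hgstep : ∀ s : ZMod N, g (s + 1) - g s = 2 * ((r (s + (m : ZMod N)) : ℤ) - (r s : ℤ)) := by
    intro s
    have := hstep s
    rw [hg_def]
    dsimp only
    linarith
  -- choose a good starting point s0 with |g s0| ≤ 2b + 2
  have hmain : ∃ s0 : ZMod N, |g s0| ≤ 2 * (b : ℤ) + 2 := by
    by_cases hall : ∀ s : ZMod N, 0 ≤ g s
    · -- all nonnegative: some g s ≤ b since the sum is ≤ N*b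
      have hex : ∃ s : ZMod N, g s ≤ (b : ℤ) := by
        by_contra hcon
        push_neg at hcon
        have h1 : ∑ s : ZMod N, ((b : ℤ) + 1) ≤ ∑ s : ZMod N, g s :=
          Finset.sum_le_sum (fun s _ => by have := hcon s; linarith)
        rw [Finset.sum_const, Finset.card_univ, ZMod.card, nsmul_eq_mul] at h1
        have : (N : ℤ) * ((b : ℤ) + 1) ≤ (N : ℤ) * b := le_trans h1 (le_trans hgsumT hTle)
        have hN' : (1 : ℤ) ≤ N := by exact_mod_cast hN
        nlinarith
      obtain ⟨s, hs⟩ := hex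
      refine ⟨s, ?_⟩
      rw [abs_le]
      constructor
      · have := hall s; linarith
      · have hb0 : (0 : ℤ) ≤ b := by positivity
        linarith
    · push_neg at hall
      obtain ⟨t, ht⟩ := hall
      have hu : ∃ u : ZMod N, 0 ≤ g u := by
        by_contra hcon
        push_neg at hcon
        have h1 : ∑ s : ZMod N, g s ≤ ∑ s : ZMod N, (-1 : ℤ) :=
          Finset.sum_le_sum (fun s _ => by have := hcon s; linarith)
        rw [Finset.sum_const, Finset.card_univ, ZMod.card, nsmul_eq_mul] at h1
        have hN' : (1 : ℤ) ≤ N := by exact_mod_cast hN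
        nlinarith [hgsum0]
      obtain ⟨u, hu⟩ := hu
      -- first crossing along the walk from t to u
      set k : ℕ := (u - t).val with hk_def
      have hku : t + ((k : ℕ) : ZMod N) = u := by
        rw [hk_def, ZMod.natCast_val, ZMod.cast_id]
        ring
      have hcross := fbcp_cross (fun j : ℕ => g (t + (j : ZMod N))) k
        (by simpa using ht) (by simpa [hku] using hu)
      obtain ⟨j, hj1, hj2⟩ := hcross
      refine ⟨t + (j : ZMod N) + 1, ?_⟩
      have hcast : t + (((j + 1 : ℕ)) : ZMod N) = t + (j : ZMod N) + 1 := by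
        push_cast; ring
      rw [hcast] at hj2
      have hstepb := hgstep (t + (j : ZMod N))
      have hrb1 := hr (t + (j : ZMod N) + (m : ZMod N))
      have hrb2 := hr (t + (j : ZMod N))
      have hrb1' : (r (t + (j : ZMod N) + (m : ZMod N)) : ℤ) ≤ (b : ℤ) := by exact_mod_cast hrb1
      rw [abs_le]
      constructor
      · have hb0 : (0 : ℤ) ≤ b := by positivity
        linarith
      · linarith
  obtain ⟨s0, hs0⟩ := hmain
  refine ⟨I s0, ⟨s0, m, hmN, by rw [hI_def]⟩, ?_, ?_⟩
  · rw [hcard, hcardc]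
    have : ((N - m : ℕ) : ℤ) = (N : ℤ) - m := by
      push_cast [Nat.cast_sub hmN]; ring
    rw [this, abs_le]
    constructor <;> omega
  · rw [hSI, hcompl]
    have : S s0 - (T - S s0) = g s0 := by rw [hg_def]; ring
    rw [this]
    exact hs0
end

section
/- Let m ≥ 1, L, W be natural numbers, and let s, w : ZMod m → ℕ satisfy s j ≤ L and w j ≤ W for every j. Then there exists a cyclically contiguous subset J of ZMod m (i.e., J = {t, t+1, ..., t+ℓ−1} with indices taken modulo m, for some t and some 0 ≤ ℓ ≤ m) such that: (i) |∑_{j ∈ J} s j − ∑_{j ∉ J} s j| ≤ 4·L + 2, and (ii) |∑_{j ∈ J} w j − ∑_{j ∉ J} w j| ≤ 4·W + 2. -/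
namespace RBaux

/-- bead-prefix: block `i` consists of `2*st i` red beads then `2*wt i` blue beads. -/
def Pf (st wt : ℕ → ℕ) (t : ℕ) : ℕ := ∑ i ∈ Finset.range t, (2 * st i + 2 * wt i)

/-- number of red beads among the first `x` beads (blocks restricted to `range m`). -/
def rf (st wt : ℕ → ℕ) (m x : ℕ) : ℕ :=
  ∑ t ∈ Finset.range m, min (2 * st t) (x - Pf st wt t)

lemma P_succ (st wt : ℕ → ℕ) (t : ℕ) :
    Pf st wt (t + 1) = Pf st wt t + (2 * st t + 2 * wt t) := Finset.sum_range_succ _ t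

lemma P_mono (st wt : ℕ → ℕ) {i j : ℕ} (h : i ≤ j) : Pf st wt i ≤ Pf st wt j :=
  Finset.sum_le_sum_of_subset (Finset.range_subset_range.2 h)

lemma r_boundary (st wt : ℕ → ℕ) {m k : ℕ} (hk : k ≤ m) :
    rf st wt m (Pf st wt k) = 2 * ∑ t ∈ Finset.range k, st t := by
  have h1 : ∀ t ∈ Finset.range k,
      min (2 * st t) (Pf st wt k - Pf st wt t) = 2 * st t := by
    intro t ht
    have ht' : t + 1 ≤ k := Finset.mem_range.1 ht
    have hh := P_mono st wt ht'
    rw [P_succ] at hh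
    exact min_eq_left (by omega)
  have h2 : ∀ t ∈ Finset.Ico k m,
      min (2 * st t) (Pf st wt k - Pf st wt t) = 0 := by
    intro t ht
    have hh : Pf st wt k ≤ Pf st wt t := P_mono st wt (Finset.mem_Ico.1 ht).1
    have e : Pf st wt k - Pf st wt t = 0 := by omega
    rw [e]; simp
  have e1 := Finset.sum_congr rfl h1
  have e2 : ∑ t ∈ Finset.Ico k m, min (2 * st t) (Pf st wt k - Pf st wt t) = 0 :=
    Finset.sum_eq_zero h2
  unfold rf
  rw [← Finset.sum_range_add_sum_Ico _ hk, e1, e2, add_zero, Finset.mul_sum]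

lemma r_mono (st wt : ℕ → ℕ) (m : ℕ) {x y : ℕ} (h : x ≤ y) :
    rf st wt m x ≤ rf st wt m y :=
  Finset.sum_le_sum fun t _ => min_le_min le_rfl (Nat.sub_le_sub_right h _)

lemma min_succ (u v : ℕ) : min u (v + 1) ≤ min u v + 1 := by
  rcases le_total u v with h | h
  · rw [min_eq_left h, min_eq_left (by omega)]; omega
  · rw [min_eq_right h]; exact min_le_right _ _

lemma r_step (st wt : ℕ → ℕ) (m x : ℕ) :
    rf st wt m (x + 1) ≤ rf st wt m x + 1 := by
  unfold rf
  have hact : ∀ t, min (2 * st t) (x - Pf st wt t) < min (2 * st t) (x + 1 - Pf st wt t) →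
      Pf st wt t ≤ x ∧ x - Pf st wt t < 2 * st t := by
    intro t ht
    have hP : Pf st wt t ≤ x := by
      by_contra hc; push_neg at hc
      have e : x + 1 - Pf st wt t = 0 := by omega
      rw [e] at ht
      have h0 : min (2 * st t) 0 = 0 := by simp
      omega
    refine ⟨hP, ?_⟩
    by_contra hc; push_neg at hc
    have e : min (2 * st t) (x - Pf st wt t) = 2 * st t := min_eq_left hc
    have h2 := min_le_left (2 * st t) (x + 1 - Pf st wt t)
    omega
  by_cases hex : ∃ t ∈ Finset.range m,
      min (2 * st t) (x - Pf st wt t) < min (2 * st t) (x + 1 - Pf st wt t)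
  · obtain ⟨t0, ht0m, ht0⟩ := hex
    obtain ⟨hP0, hx0⟩ := hact t0 ht0
    have hoth : ∀ t ∈ (Finset.range m).erase t0,
        min (2 * st t) (x + 1 - Pf st wt t) ≤ min (2 * st t) (x - Pf st wt t) := by
      intro t ht
      by_contra hc; push_neg at hc
      obtain ⟨hP1, hx1⟩ := hact t hc
      have hne : t ≠ t0 := (Finset.mem_erase.1 ht).1
      rcases Nat.lt_or_ge t t0 with hlt | hge
      · have h2 := P_mono st wt (show t + 1 ≤ t0 from hlt)
        rw [P_succ] at h2; omega
      · have hgt : t0 + 1 ≤ t := by omega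
        have h2 := P_mono st wt hgt
        rw [P_succ] at h2; omega
    have key1 : min (2 * st t0) (x + 1 - Pf st wt t0)
        ≤ min (2 * st t0) (x - Pf st wt t0) + 1 := by
      have e : x + 1 - Pf st wt t0 ≤ (x - Pf st wt t0) + 1 := by omega
      exact le_trans (min_le_min le_rfl e) (min_succ _ _)
    calc ∑ t ∈ Finset.range m, min (2 * st t) (x + 1 - Pf st wt t)
        = min (2 * st t0) (x + 1 - Pf st wt t0) +
            ∑ t ∈ (Finset.range m).erase t0, min (2 * st t) (x + 1 - Pf st wt t) :=
          (Finset.add_sum_erase _ _ ht0m).symm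
      _ ≤ (min (2 * st t0) (x - Pf st wt t0) + 1) +
            ∑ t ∈ (Finset.range m).erase t0, min (2 * st t) (x - Pf st wt t) :=
          Nat.add_le_add key1 (Finset.sum_le_sum hoth)
      _ = (min (2 * st t0) (x - Pf st wt t0) +
            ∑ t ∈ (Finset.range m).erase t0, min (2 * st t) (x - Pf st wt t)) + 1 := by omega
      _ = (∑ t ∈ Finset.range m, min (2 * st t) (x - Pf st wt t)) + 1 := by
          rw [Finset.add_sum_erase (Finset.range m)
            (fun t => min (2 * st t) (x - Pf st wt t)) ht0m]
  · push_neg at hex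
    exact le_trans (Finset.sum_le_sum hex) (Nat.le_succ _)

lemma r_lip (st wt : ℕ → ℕ) (m x : ℕ) : ∀ c : ℕ, rf st wt m (x + c) ≤ rf st wt m x + c := by
  intro c
  induction c with
  | zero => simp
  | succ p ih =>
    have h := r_step st wt m (x + p)
    have e : x + (p + 1) = (x + p) + 1 := by omega
    rw [e]; omega

lemma ivt (f : ℕ → ℤ) (hf : ∀ i, f (i + 1) ≤ f i + 1) (h0 : f 0 ≤ 0) :
    ∀ n : ℕ, 0 ≤ f n → ∃ x, x ≤ n ∧ f x = 0 := by
  intro n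
  induction n with
  | zero => intro h; exact ⟨0, le_rfl, le_antisymm h0 h⟩
  | succ p ih =>
    intro h
    by_cases hp : 0 ≤ f p
    · obtain ⟨x, h1, h2⟩ := ih hp
      exact ⟨x, by omega, h2⟩
    · push_neg at hp
      refine ⟨p + 1, le_rfl, ?_⟩
      have := hf p
      omega

lemma core (m L W : ℕ) (st wt : ℕ → ℕ) (hsL : ∀ t, st t ≤ L) (hwW : ∀ t, wt t ≤ W) :
    ∃ j k : ℕ, j ≤ k ∧ k ≤ m ∧
      |2 * ((∑ t ∈ Finset.Ico j k, st t : ℕ) : ℤ) - ((∑ t ∈ Finset.range m, st t : ℕ) : ℤ)| ≤ 2 * L ∧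
      |2 * ((∑ t ∈ Finset.Ico j k, wt t : ℕ) : ℤ) - ((∑ t ∈ Finset.range m, wt t : ℕ) : ℤ)| ≤ 2 * W := by
  set S := ∑ t ∈ Finset.range m, st t with hS
  set T := ∑ t ∈ Finset.range m, wt t with hT
  set n := S + T with hn
  by_cases hn0 : n = 0
  · have hS0 : S = 0 := by omega
    have hT0 : T = 0 := by omega
    refine ⟨0, 0, le_rfl, Nat.zero_le m, ?_, ?_⟩
    · simp [Finset.Ico_self, hS0]
    · simp [Finset.Ico_self, hT0]
  · have hPm : Pf st wt m = 2 * n := by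
      have h : Pf st wt m = 2 * S + 2 * T := by
        unfold Pf
        rw [Finset.sum_add_distrib, ← Finset.mul_sum, ← Finset.mul_sum, ← hS, ← hT]
      omega
    have hr0 : rf st wt m 0 = 0 := by
      unfold rf
      apply Finset.sum_eq_zero
      intro t _
      have e : 0 - Pf st wt t = 0 := by omega
      rw [e]; simp
    have h2S : rf st wt m (2 * n) = 2 * S := by
      have h := r_boundary st wt (le_rfl : m ≤ m)
      rw [hPm] at h
      rw [h, ← hS]
    have hstep1 : ∀ x : ℕ, ((rf st wt m (x+1+n) : ℤ) - rf st wt m (x+1) - S)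
        ≤ ((rf st wt m (x+n) : ℤ) - rf st wt m x - S) + 1 := by
      intro x
      have h1 := r_step st wt m (x + n)
      have h2 := r_mono st wt m (show x ≤ x + 1 by omega)
      have e : x + 1 + n = x + n + 1 := by omega
      rw [e]; omega
    have hstep2 : ∀ x : ℕ, ((rf st wt m (x+1+n) : ℤ) - rf st wt m (x+1) - S) + 1
        ≥ ((rf st wt m (x+n) : ℤ) - rf st wt m x - S) := by
      intro x
      have h1 := r_step st wt m x
      have h2 := r_mono st wt m (show x + n ≤ x + 1 + n by omega)
      omega
    have hx0 : ∃ x0, x0 ≤ n ∧ rf st wt m (x0 + n) = rf st wt m x0 + S := by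
      rcases le_or_gt ((rf st wt m (0+n) : ℤ) - rf st wt m 0 - S) 0 with h0 | h0
      · have hfn : (0:ℤ) ≤ (rf st wt m (n+n) : ℤ) - rf st wt m n - S := by
          have e : n + n = 2 * n := by omega
          have h0' : (0:ℕ) + n = n := by omega
          rw [h0', hr0] at h0
          rw [e, h2S]
          push_cast at h0 ⊢
          omega
        obtain ⟨x, hxn, hxe⟩ :=
          ivt (fun x => (rf st wt m (x+n) : ℤ) - rf st wt m x - S) hstep1 h0 n hfn
        have hxe' : (rf st wt m (x+n) : ℤ) - rf st wt m x - S = 0 := hxe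
        exact ⟨x, hxn, by omega⟩
      · have hf0 : ((rf st wt m 0 : ℤ) + S - rf st wt m (0+n)) ≤ 0 := by omega
        have hfn : (0:ℤ) ≤ (rf st wt m n : ℤ) + S - rf st wt m (n+n) := by
          have e : n + n = 2 * n := by omega
          have h0' : (0:ℕ) + n = n := by omega
          rw [h0', hr0] at h0
          rw [e, h2S]
          push_cast at h0 ⊢
          omega
        have hstep2' : ∀ x : ℕ, ((rf st wt m (x+1) : ℤ) + S - rf st wt m (x+1+n))
            ≤ ((rf st wt m x : ℤ) + S - rf st wt m (x+n)) + 1 := by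
          intro x
          have := hstep2 x
          omega
        obtain ⟨x, hxn, hxe⟩ :=
          ivt (fun x => (rf st wt m x : ℤ) + S - rf st wt m (x+n)) hstep2' hf0 n hfn
        have hxe' : (rf st wt m x : ℤ) + S - rf st wt m (x+n) = 0 := hxe
        exact ⟨x, hxn, by omega⟩
    obtain ⟨x0, hx0n, hbal⟩ := hx0
    have hP0 : Pf st wt 0 = 0 := by simp [Pf]
    set j := Nat.findGreatest (fun t => Pf st wt t ≤ x0) m with hjdef
    set k := Nat.findGreatest (fun t => Pf st wt t ≤ x0 + n) m with hkdef
    have hj0 : Pf st wt j ≤ x0 := by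
      rw [hjdef]
      exact Nat.findGreatest_spec (P := fun t => Pf st wt t ≤ x0) (Nat.zero_le m) (show Pf st wt 0 ≤ x0 by omega)
    have hjm : j ≤ m := by rw [hjdef]; exact Nat.findGreatest_le m
    have hk0 : Pf st wt k ≤ x0 + n := by
      rw [hkdef]
      exact Nat.findGreatest_spec (P := fun t => Pf st wt t ≤ x0 + n) (Nat.zero_le m) (show Pf st wt 0 ≤ x0 + n by omega)
    have hkm : k ≤ m := by rw [hkdef]; exact Nat.findGreatest_le m
    have hjk : j ≤ k := by
      rw [hjdef, hkdef]
      exact Nat.findGreatest_mono (fun t ht => by omega) le_rfl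
    have hjlt : j < m := by
      rcases Nat.lt_or_ge j m with h | h
      · exact h
      · exfalso
        have hjm' : j = m := by omega
        rw [hjm'] at hj0
        omega
    have hj1 : x0 < Pf st wt (j + 1) := by
      by_contra hc; push_neg at hc
      have hgg := Nat.findGreatest_is_greatest (P := fun t => Pf st wt t ≤ x0) (n := m)
        (k := j + 1) (by rw [← hjdef]; omega) (by omega)
      exact hgg hc
    -- bounds at the left cut
    have hb1j : rf st wt m (Pf st wt (j+1)) = rf st wt m (Pf st wt j) + 2 * st j := by
      rw [r_boundary st wt (show j + 1 ≤ m by omega), r_boundary st wt hjm,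
        Finset.sum_range_succ]
      ring
    have hPsj : Pf st wt (j+1) = Pf st wt j + (2 * st j + 2 * wt j) := P_succ st wt j
    have hmj : rf st wt m x0 ≤ rf st wt m (Pf st wt (j+1)) := r_mono st wt m (le_of_lt hj1)
    have hmj0 : rf st wt m (Pf st wt j) ≤ rf st wt m x0 := r_mono st wt m hj0
    obtain ⟨c1, hc1⟩ : ∃ c, x0 + c = Pf st wt (j+1) := ⟨Pf st wt (j+1) - x0, by omega⟩
    have hlipj := r_lip st wt m x0 c1
    rw [hc1] at hlipj
    obtain ⟨c2, hc2⟩ : ∃ c, Pf st wt j + c = x0 := ⟨x0 - Pf st wt j, by omega⟩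
    have hlipj2 := r_lip st wt m (Pf st wt j) c2
    rw [hc2] at hlipj2
    -- bounds at the right cut
    have hmk0 : rf st wt m (Pf st wt k) ≤ rf st wt m (x0 + n) := r_mono st wt m hk0
    obtain ⟨c3, hc3⟩ : ∃ c, Pf st wt k + c = x0 + n := ⟨x0 + n - Pf st wt k, by omega⟩
    have hlipk2 := r_lip st wt m (Pf st wt k) c3
    rw [hc3] at hlipk2
    have hkcase : rf st wt m (x0+n) ≤ rf st wt m (Pf st wt k) + 2 * st k ∧
        (x0+n) + rf st wt m (Pf st wt k) ≤ Pf st wt k + rf st wt m (x0+n) + 2 * wt k := by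
      rcases Nat.lt_or_ge k m with hklt | hkge
      · have hk1 : x0 + n < Pf st wt (k + 1) := by
          by_contra hc; push_neg at hc
          have hgg := Nat.findGreatest_is_greatest (P := fun t => Pf st wt t ≤ x0 + n) (n := m)
            (k := k + 1) (by rw [← hkdef]; omega) (by omega)
          exact hgg hc
        have hb1k : rf st wt m (Pf st wt (k+1)) = rf st wt m (Pf st wt k) + 2 * st k := by
          rw [r_boundary st wt (show k + 1 ≤ m by omega), r_boundary st wt hkm,
            Finset.sum_range_succ]
          ring
        have hPsk : Pf st wt (k+1) = Pf st wt k + (2 * st k + 2 * wt k) := P_succ st wt k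
        have hmk : rf st wt m (x0+n) ≤ rf st wt m (Pf st wt (k+1)) := r_mono st wt m (le_of_lt hk1)
        obtain ⟨c4, hc4⟩ : ∃ c, (x0 + n) + c = Pf st wt (k+1) := ⟨Pf st wt (k+1) - (x0+n), by omega⟩
        have hlipk := r_lip st wt m (x0 + n) c4
        rw [hc4] at hlipk
        constructor
        · omega
        · omega
      · have hkm' : k = m := by omega
        have hPk : Pf st wt k = 2 * n := by rw [hkm']; exact hPm
        have he : x0 + n = Pf st wt k := by omega
        constructor
        · rw [he]; omega
        · rw [he]; omega
    -- interval sums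
    have hsums : rf st wt m (Pf st wt k) = rf st wt m (Pf st wt j) + 2 * ∑ t ∈ Finset.Ico j k, st t := by
      rw [r_boundary st wt hkm, r_boundary st wt hjm, ← Finset.sum_range_add_sum_Ico st hjk]
      omega
    have hsumP : Pf st wt k = Pf st wt j +
        (2 * ∑ t ∈ Finset.Ico j k, st t + 2 * ∑ t ∈ Finset.Ico j k, wt t) := by
      have e1 : ∑ t ∈ Finset.Ico j k, (2 * st t + 2 * wt t)
          = 2 * ∑ t ∈ Finset.Ico j k, st t + 2 * ∑ t ∈ Finset.Ico j k, wt t := by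
        rw [Finset.sum_add_distrib, ← Finset.mul_sum, ← Finset.mul_sum]
      unfold Pf
      rw [← Finset.sum_range_add_sum_Ico (fun i => 2 * st i + 2 * wt i) hjk, e1]
    have hsLj := hsL j
    have hsLk := hsL k
    have hwWj := hwW j
    have hwWk := hwW k
    refine ⟨j, k, hjk, hkm, ?_, ?_⟩
    · rw [abs_le]; constructor <;> omega
    · rw [abs_le]; constructor <;> omega

lemma sum_univ_zmod {M : Type*} [AddCommMonoid M] {m : ℕ} [NeZero m] (F : ZMod m → M) :
    ∑ x : ZMod m, F x = ∑ t ∈ Finset.range m, F ((t : ℕ) : ZMod m) := by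
  refine Finset.sum_nbij' (fun x => ZMod.val x) (fun t => ((t : ℕ) : ZMod m)) ?_ ?_ ?_ ?_ ?_
  · intro x _; exact Finset.mem_range.2 (ZMod.val_lt x)
  · intro t _; exact Finset.mem_univ _
  · intro x _; exact ZMod.natCast_rightInverse x
  · intro t ht; exact ZMod.val_cast_of_lt (Finset.mem_range.1 ht)
  · intro x _; rw [ZMod.natCast_rightInverse x]

end RBaux

/-- Combinatorial core of the relax-balanced partition: blocks of bounded
size and bounded weight admit a cyclically contiguous two-piece partition
that nearly balances both total size and total weight. -/
theorem relax_balanced_cyclic_partition (m L W : ℕ) [NeZero m] (hm : 1 ≤ m)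
    (s w : ZMod m → ℕ) (hs : ∀ j, s j ≤ L) (hw : ∀ j, w j ≤ W) :
    ∃ J : Finset (ZMod m),
      (∃ (t : ZMod m) (ℓ : ℕ), ℓ ≤ m ∧
        J = (Finset.range ℓ).image (fun j : ℕ => t + (j : ZMod m))) ∧
      |(∑ j ∈ J, (s j : ℤ)) - ∑ j ∈ Jᶜ, (s j : ℤ)| ≤ 4 * (L : ℤ) + 2 ∧
      |(∑ j ∈ J, (w j : ℤ)) - ∑ j ∈ Jᶜ, (w j : ℤ)| ≤ 4 * (W : ℤ) + 2 := by
  obtain ⟨j, k, hjk, hkm, hred, hblue⟩ :=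
    RBaux.core m L W (fun t => s ((t : ℕ) : ZMod m)) (fun t => w ((t : ℕ) : ZMod m))
      (fun t => hs _) (fun t => hw _)
  have hred' : |2 * ((∑ t ∈ Finset.Ico j k, s ((t : ℕ) : ZMod m) : ℕ) : ℤ)
      - ((∑ t ∈ Finset.range m, s ((t : ℕ) : ZMod m) : ℕ) : ℤ)| ≤ 2 * L := hred
  have hblue' : |2 * ((∑ t ∈ Finset.Ico j k, w ((t : ℕ) : ZMod m) : ℕ) : ℤ)
      - ((∑ t ∈ Finset.range m, w ((t : ℕ) : ZMod m) : ℕ) : ℤ)| ≤ 2 * W := hblue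
  set J : Finset (ZMod m) :=
    (Finset.range (k - j)).image (fun i : ℕ => ((j : ℕ) : ZMod m) + (i : ZMod m)) with hJ
  have hinj : ∀ i1 ∈ Finset.range (k - j), ∀ i2 ∈ Finset.range (k - j),
      ((j : ℕ) : ZMod m) + (i1 : ZMod m) = ((j : ℕ) : ZMod m) + (i2 : ZMod m) → i1 = i2 := by
    intro i1 h1 i2 h2 he
    have h3 : ((i1 : ℕ) : ZMod m) = ((i2 : ℕ) : ZMod m) := by
      exact add_left_cancel he
    have h4 := congrArg ZMod.val h3
    rw [ZMod.val_cast_of_lt (show i1 < m by have := Finset.mem_range.1 h1; omega),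
      ZMod.val_cast_of_lt (show i2 < m by have := Finset.mem_range.1 h2; omega)] at h4
    exact h4
  have hkey : ∀ F : ZMod m → ℕ,
      ∑ x ∈ J, F x = ∑ t ∈ Finset.Ico j k, F ((t : ℕ) : ZMod m) := by
    intro F
    rw [hJ, Finset.sum_image hinj, Finset.sum_Ico_eq_sum_range]
    apply Finset.sum_congr rfl
    intro i _
    congr 1
    push_cast
    ring
  have hks := hkey s
  have hkw := hkey w
  have hcs := Finset.sum_add_sum_compl J s
  have hcw := Finset.sum_add_sum_compl J w
  have hus := RBaux.sum_univ_zmod s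
  have huw := RBaux.sum_univ_zmod w
  have h1 : ∑ x ∈ J, (s x : ℤ) = ((∑ x ∈ J, s x : ℕ) : ℤ) := by push_cast; rfl
  have h2 : ∑ x ∈ Jᶜ, (s x : ℤ) = ((∑ x ∈ Jᶜ, s x : ℕ) : ℤ) := by push_cast; rfl
  have h3 : ∑ x ∈ J, (w x : ℤ) = ((∑ x ∈ J, w x : ℕ) : ℤ) := by push_cast; rfl
  have h4 : ∑ x ∈ Jᶜ, (w x : ℤ) = ((∑ x ∈ Jᶜ, w x : ℕ) : ℤ) := by push_cast; rfl
  rw [abs_le] at hred' hblue'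
  refine ⟨J, ⟨((j : ℕ) : ZMod m), k - j, by omega, hJ⟩, ?_, ?_⟩
  · rw [h1, h2, abs_le]
    constructor <;> omega
  · rw [h3, h4, abs_le]
    constructor <;> omega
end
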